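/- Let D ≥ 1 and let x, y ∈ ℝ^D satisfy x_i ≥ 0 and y_i ≥ 0 for all 1 ≤ i ≤ D, together with ∑_{i=1}^D x_i = 1 and ∑_{i=1}^D y_i = 1. Then the chi-square similarity ρ_{χ²}(x, y) := ∑_{i=1}^D 2·x_i·y_i/(x_i + y_i) is greater than or equal to ρ_1(x, y) := (∑_{i=1}^D √(x_i·y_i))². -/

import Mathlib

/-- For probability vectors `x y : ℝ^D` (nonnegative coordinates with unit sums),
the chi-square similarity `ρ_{χ²}(x, y) = ∑ i, 2·x_i·y_i/(x_i + y_i)` is at least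
`ρ_1(x, y) = (∑ i, √(x_i·y_i))²`.
(Terms with vanishing denominator are `0`, by Lean's `0/0 = 0` convention.) -/
theorem chi_square_ge_rho_one (D : ℕ) (hD : 1 ≤ D) (x y : Fin D → ℝ)
    (hx : ∀ i, 0 ≤ x i) (hy : ∀ i, 0 ≤ y i)
    (hxs : ∑ i, x i = 1) (hys : ∑ i, y i = 1) :
    (∑ i, Real.sqrt (x i * y i)) ^ 2 ≤ ∑ i, 2 * x i * y i / (x i + y i) := by
  have key := Finset.sum_sq_le_sum_mul_sum_of_sq_eq_mul (Finset.univ : Finset (Fin D))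
    (r := fun i => Real.sqrt (x i * y i))
    (f := fun i => 2 * x i * y i / (x i + y i))
    (g := fun i => (x i + y i) / 2)
    (fun i _ => div_nonneg (mul_nonneg (mul_nonneg (by norm_num) (hx i)) (hy i))
      (add_nonneg (hx i) (hy i)))
    (fun i _ => div_nonneg (add_nonneg (hx i) (hy i)) (by norm_num))
    (fun i _ => by
      rcases eq_or_lt_of_le (add_nonneg (hx i) (hy i)) with h | h
      · have hx0 : x i = 0 := by linarith [hx i, hy i]
        simp [hx0]
      · rw [Real.sq_sqrt (mul_nonneg (hx i) (hy i))]
        field_simp)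
  have hsum : ∑ i, (x i + y i) / 2 = 1 := by
    rw [← Finset.sum_div, Finset.sum_add_distrib, hxs, hys]; norm_num
  calc (∑ i, Real.sqrt (x i * y i)) ^ 2
      ≤ (∑ i, 2 * x i * y i / (x i + y i)) * ∑ i, (x i + y i) / 2 := key
    _ = ∑ i, 2 * x i * y i / (x i + y i) := by rw [hsum, mul_one]
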